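/- Let p be a prime and let V be a vector space over 𝔽_p (e.g., ⊕_{ℕ} 𝔽_p acting on itself by translation). If φ : V → S¹ is a phase polynomial of degree < k with k ≥ p, meaning Δ_{h₁}⋯Δ_{h_k} φ = 1 for all h_i ∈ V, then φ^p is a phase polynomial of degree < k − p + 1. -/

import Mathlib

/-- The multiplicative derivative `Δ_h φ (x) = φ(x + h) · conj (φ x)` of a complex
valued function on an additive abelian group. -/
def mderC {V : Type*} [AddCommGroup V] (h : V) (φ : V → ℂ) : V → ℂ :=
  fun x => φ (x + h) * (starRingEnd ℂ) (φ x)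

namespace PowPAux

variable {V : Type*} [AddCommGroup V]

lemma mderC_one (h : V) : mderC h (fun _ => (1 : ℂ)) = fun _ => 1 := by
  funext x; simp [mderC]

lemma abs_mderC (h : V) (φ : V → ℂ) (hu : ∀ x, ‖φ x‖ = 1) (x : V) :
    ‖mderC h φ x‖ = 1 := by
  simp [mderC, map_mul, hu]

lemma abs_iterate (h : V) (φ : V → ℂ) (hu : ∀ x, ‖φ x‖ = 1) (n : ℕ) :
    ∀ x : V, ‖(mderC h)^[n] φ x‖ = 1 := by
  induction n with
  | zero => simpa using hu
  | succ n ih =>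
    intro x
    rw [Function.iterate_succ_apply']
    exact abs_mderC _ _ ih x

lemma iterate_const_one (h : V) (n : ℕ) :
    (mderC h)^[n] (fun _ => (1 : ℂ)) = fun _ => 1 := by
  induction n with
  | zero => rfl
  | succ n ih => rw [Function.iterate_succ_apply, mderC_one, ih]

lemma shift (h : V) (f : V → ℂ) (x : V) (hf : ‖f x‖ = 1) :
    f (x + h) = mderC h f x * f x := by
  have h1 : (starRingEnd ℂ) (f x) * f x = 1 := by
    rw [mul_comm, Complex.mul_conj, Complex.normSq_eq_norm_sq, hf]
    norm_num
  calc f (x + h) = f (x + h) * ((starRingEnd ℂ) (f x) * f x) := by rw [h1, mul_one]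
    _ = mderC h f x * f x := by rw [mderC]; ring

lemma pascal_prod {M : Type*} [CommMonoid M] (f : ℕ → M) (m : ℕ) :
    ∏ j ∈ Finset.range (m + 2), f j ^ ((m + 1).choose j) =
    (∏ j ∈ Finset.range (m + 1), f (j + 1) ^ (m.choose j)) *
      ∏ j ∈ Finset.range (m + 1), f j ^ (m.choose j) := by
  have h1 : ∏ j ∈ Finset.range (m + 2), f j ^ ((m + 1).choose j)
      = (∏ j ∈ Finset.range (m + 1), f (j + 1) ^ ((m + 1).choose (j + 1)))
        * f 0 ^ ((m + 1).choose 0) :=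
    Finset.prod_range_succ' _ _
  have h2 : ∏ j ∈ Finset.range (m + 2), f j ^ (m.choose j)
      = (∏ j ∈ Finset.range (m + 1), f (j + 1) ^ (m.choose (j + 1)))
        * f 0 ^ (m.choose 0) :=
    Finset.prod_range_succ' _ _
  have h3 : ∏ j ∈ Finset.range (m + 2), f j ^ (m.choose j)
      = (∏ j ∈ Finset.range (m + 1), f j ^ (m.choose j)) * f (m + 1) ^ (m.choose (m + 1)) :=
    Finset.prod_range_succ _ _
  simp only [Nat.choose_succ_succ, pow_add, Finset.prod_mul_distrib,
    Nat.succ_eq_add_one] at h1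
  rw [Nat.choose_succ_self, pow_zero, mul_one] at h3
  rw [h1, ← h3, h2, Nat.choose_zero_right, Nat.choose_zero_right, pow_one, mul_assoc]

lemma translate (h : V) (χ : V → ℂ) (hχ : ∀ x, ‖χ x‖ = 1) (m : ℕ) :
    ∀ x : V, χ (x + m • h) =
      ∏ j ∈ Finset.range (m + 1), ((mderC h)^[j] χ x) ^ (m.choose j) := by
  induction m with
  | zero => intro x; simp
  | succ m ih =>
    intro x
    have hx : x + (m + 1) • h = (x + h) + m • h := by
      rw [succ_nsmul]; abel
    rw [hx, ih (x + h)]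
    have hfac : ∀ j ∈ Finset.range (m + 1),
        ((mderC h)^[j] χ (x + h)) ^ (m.choose j)
          = ((mderC h)^[j + 1] χ x * (mderC h)^[j] χ x) ^ (m.choose j) := by
      intro j _
      rw [Function.iterate_succ_apply',
        shift h _ x (abs_iterate h χ hχ j x)]
    rw [Finset.prod_congr rfl hfac]
    simp_rw [mul_pow]
    rw [Finset.prod_mul_distrib, ← pascal_prod (fun j => (mderC h)^[j] χ x) m]

lemma key1 (p : ℕ) (hp1 : 1 ≤ p) (h : V) (hph : p • h = 0) (χ : V → ℂ)
    (hχ : ∀ x, ‖χ x‖ = 1)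
    (hder : ∀ y, (mderC h)^[p] χ y = 1) (x : V) :
    ∏ i ∈ Finset.range (p - 1), ((mderC h)^[i + 1] χ x) ^ (p.choose (i + 1)) = 1 := by
  have ht := translate h χ hχ p x
  rw [hph, add_zero] at ht
  rw [Finset.prod_range_succ' (fun j => ((mderC h)^[j] χ x) ^ (p.choose j)) p] at ht
  simp only [Function.iterate_zero_apply, Nat.choose_zero_right, pow_one] at ht
  obtain ⟨q, rfl⟩ : ∃ q, p = q + 1 := ⟨p - 1, by omega⟩
  rw [Finset.prod_range_succ] at ht
  rw [hder x, Nat.choose_self, one_pow, mul_one] at ht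
  have hne : χ x ≠ 0 := by
    intro h0
    have := hχ x
    rw [h0] at this
    simp at this
  have h1 : (1 : ℂ) * χ x
      = (∏ j ∈ Finset.range q, ((mderC h)^[j + 1] χ x) ^ ((q + 1).choose (j + 1))) * χ x := by
    rw [one_mul, ← ht]
  have h2 := mul_right_cancel₀ hne h1
  simpa [Nat.add_sub_cancel] using h2.symm

lemma key2 (p : ℕ) (hp : p.Prime) (f : ℕ → ℂ)
    (htop : ∀ j, p ≤ j → f j = 1)
    (hrec : ∀ m, ∏ i ∈ Finset.range (p - 1), f (m + i + 1) ^ (p.choose (i + 1)) = 1) :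
    ∀ j, 1 ≤ j → f j ^ p = 1 := by
  suffices H : ∀ d j, 1 ≤ j → p ≤ j + d → f j ^ p = 1 by
    intro j hj; exact H p j hj (Nat.le_add_left _ _)
  intro d
  induction d with
  | zero =>
    intro j hj hpj
    rw [htop j (by omega)]
    exact one_pow p
  | succ d ih =>
    intro j hj hpj
    by_cases hc : p ≤ j + d
    · exact ih j hj hc
    · have hp2 : 2 ≤ p := hp.two_le
      have hj' : ∏ i ∈ Finset.range (p - 1), f (j + i) ^ (p.choose (i + 1)) = 1 := by
        rw [← hrec (j - 1)]
        exact Finset.prod_congr rfl (fun i _ => by rw [show j + i = j - 1 + i + 1 by omega])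
      obtain ⟨r, hr⟩ : ∃ r, p - 1 = r + 1 := ⟨p - 2, by omega⟩
      rw [hr, Finset.prod_range_succ' (fun i => f (j + i) ^ (p.choose (i + 1)))] at hj'
      have hprod : ∏ i ∈ Finset.range r, f (j + (i + 1)) ^ (p.choose (i + 1 + 1)) = 1 := by
        apply Finset.prod_eq_one
        intro i hi
        have hi' := Finset.mem_range.mp hi
        obtain ⟨c, hc2⟩ := hp.dvd_choose_self (by omega : i + 1 + 1 ≠ 0)
          (by omega : i + 1 + 1 < p)
        rw [hc2, pow_mul, ih (j + (i + 1)) (by omega) (by omega), one_pow]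
      rw [hprod, one_mul, add_zero, Nat.choose_one_right] at hj'
      exact hj'

lemma core (p : ℕ) (hp : p.Prime) (h : V) (hph : p • h = 0) (χ : V → ℂ)
    (hχ : ∀ x, ‖χ x‖ = 1)
    (hder : ∀ y, (mderC h)^[p] χ y = 1) (x : V) :
    (mderC h χ x) ^ p = 1 := by
  have hone : (mderC h)^[p] χ = fun _ => 1 := funext hder
  set f : ℕ → ℂ := fun j => (mderC h)^[j] χ x with hf
  have htop : ∀ j, p ≤ j → f j = 1 := by
    intro j hj
    have h1 : (mderC h)^[j] χ = (mderC h)^[j - p] ((mderC h)^[p] χ) := by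
      rw [← Function.iterate_add_apply, Nat.sub_add_cancel hj]
    simp [hf, h1, hone, iterate_const_one]
  have hrec : ∀ m, ∏ i ∈ Finset.range (p - 1), f (m + i + 1) ^ (p.choose (i + 1)) = 1 := by
    intro m
    have h1 := key1 p hp.pos h hph ((mderC h)^[m] χ)
      (abs_iterate h χ hχ m)
      (fun y => by
        rw [← Function.iterate_add_apply, Nat.add_comm, Function.iterate_add_apply, hone,
          iterate_const_one]) x
    rw [← h1]
    apply Finset.prod_congr rfl
    intro i _
    rw [← Function.iterate_add_apply, show i + 1 + m = m + i + 1 by omega]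
  have h2 := key2 p hp f htop hrec 1 le_rfl
  simpa [hf] using h2

lemma foldr_pow (L : List V) (φ : V → ℂ) (n : ℕ) :
    L.foldr mderC (fun x => φ x ^ n) = fun x => (L.foldr mderC φ x) ^ n := by
  induction L with
  | nil => rfl
  | cons a L ih =>
    simp only [List.foldr_cons, ih]
    funext x
    simp [mderC, mul_pow, map_pow]

lemma foldr_abs (L : List V) (φ : V → ℂ) (hu : ∀ x, ‖φ x‖ = 1) :
    ∀ x, ‖L.foldr mderC φ x‖ = 1 := by
  induction L with
  | nil => exact hu
  | cons a L ih => exact abs_mderC a _ ih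

lemma foldr_replicate (h : V) (n : ℕ) (φ : V → ℂ) :
    (List.replicate n h).foldr mderC φ = (mderC h)^[n] φ := by
  induction n with
  | zero => rfl
  | succ n ih =>
    rw [List.replicate_succ, List.foldr_cons, ih, Function.iterate_succ_apply']

end PowPAux

/-- **`p`-th powers of phase polynomials drop degree (high characteristic lemma).**
Let `p` be a prime and `V` a vector space over `𝔽_p`.  If `φ : V → S¹` is a phase
polynomial of degree `< k` with `k ≥ p` (i.e. `Δ_{h₁} ⋯ Δ_{h_k} φ = 1` for all
`h_i ∈ V`), then the pointwise power `φ^p` is a phase polynomial of degree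
`< k − p + 1`. -/
theorem pow_p_phasePoly (p : ℕ) (hp : p.Prime) {V : Type*} [AddCommGroup V]
    [Module (ZMod p) V] (k : ℕ) (hk : p ≤ k)
    (φ : V → ℂ) (hu : ∀ x, ‖φ x‖ = 1)
    (hpoly : ∀ h : Fin k → V, ∀ x : V, ((List.ofFn h).foldr mderC φ) x = 1) :
    ∀ h : Fin (k - p + 1) → V, ∀ x : V,
      ((List.ofFn h).foldr mderC (fun x => (φ x) ^ p)) x = 1 := by
  intro h x
  have hall : ∀ v : V, p • v = 0 := fun v => by
    rw [← Nat.cast_smul_eq_nsmul (ZMod p), ZMod.natCast_self, zero_smul]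
  have hlist : ∀ L : List V, L.length = k → ∀ y, L.foldr mderC φ y = 1 := by
    intro L hL y
    subst hL
    have := hpoly L.get y
    rwa [List.ofFn_get] at this
  rw [PowPAux.foldr_pow]
  simp only
  rw [List.ofFn_succ, List.foldr_cons]
  set L' : List V := List.ofFn (fun i : Fin (k - p) => h i.succ) with hL'
  apply PowPAux.core p hp (h 0) (hall (h 0)) (L'.foldr mderC φ)
    (PowPAux.foldr_abs L' φ hu)
  intro y
  have hrep : (mderC (h 0))^[p] (L'.foldr mderC φ)
      = (List.replicate p (h 0) ++ L').foldr mderC φ := by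
    rw [List.foldr_append, PowPAux.foldr_replicate]
  rw [hrep]
  apply hlist
  simp only [List.length_append, List.length_replicate, hL', List.length_ofFn]
  omega
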